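/- Let k ≥ 3, α ≥ 0, and e, d ∈ ℝ^k. Set Q = (I + α e eᵀ)⁻¹, X = e dᵀ, and β = 1 − α‖e‖²/(1 + α‖e‖²). Define λ^{im,+} = 1 + (α²β²‖e‖²‖d‖² − 2αβ⟨e,d⟩ + αβ‖e‖‖d‖·√(α²β²‖e‖²‖d‖² + 4 − 4αβ⟨e,d⟩))/2. Then the ℓ²-operator norm of the matrix I − α Q X satisfies ‖I − αQX‖₂ = √(max{λ^{im,+}, 1}). -/

import Mathlib

open Matrix

set_option maxHeartbeats 1600000

/-- The Euclidean norm of a vector in `ℝ^k`, `‖v‖ = √⟨v,v⟩`. -/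
noncomputable def euclNorm {k : ℕ} (v : Fin k → ℝ) : ℝ := Real.sqrt (v ⬝ᵥ v)

/-- The ℓ²-operator norm of a `k × k` real matrix: the operator norm induced by the
Euclidean norm on `ℝ^k`. -/
noncomputable def l2OpNorm {k : ℕ} (A : Matrix (Fin k) (Fin k) ℝ) : ℝ :=
  ‖Matrix.toEuclideanCLM (𝕜 := ℝ) A‖

lemma dot_self_nonneg {k : ℕ} (v : Fin k → ℝ) : 0 ≤ v ⬝ᵥ v :=
  Finset.sum_nonneg fun _ _ => mul_self_nonneg _

lemma dot_cauchy {k : ℕ} (u v : Fin k → ℝ) : (u ⬝ᵥ v)^2 ≤ (u ⬝ᵥ u) * (v ⬝ᵥ v) := by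
  simpa [dotProduct, sq] using Finset.sum_mul_sq_le_sq_mul_sq Finset.univ u v

lemma vecMulVec_mul' {k : ℕ} (a b c d : Fin k → ℝ) :
    vecMulVec a b * vecMulVec c d = (b ⬝ᵥ c) • vecMulVec a d := by
  ext i j
  simp [Matrix.mul_apply, Matrix.vecMulVec_apply, dotProduct, Finset.sum_mul,
    Finset.mul_sum, mul_comm, mul_assoc, mul_left_comm]

lemma vecMulVec_mulVec' {k : ℕ} (w v x : Fin k → ℝ) :
    vecMulVec w v *ᵥ x = (v ⬝ᵥ x) • w := by
  funext i
  simp [Matrix.mulVec, Matrix.vecMulVec_apply, dotProduct, Finset.sum_mul, Finset.mul_sum,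
    mul_comm, mul_assoc, mul_left_comm]

lemma euc_norm_sq {k : ℕ} (y : Fin k → ℝ) :
    ‖(WithLp.equiv 2 (Fin k → ℝ)).symm y‖^2 = y ⬝ᵥ y := by
  rw [EuclideanSpace.norm_eq, Real.sq_sqrt (by positivity)]
  simp [dotProduct, sq_abs, sq]

example {k : ℕ} (γ : ℝ) (e d : Fin k → ℝ) (y : Fin k → ℝ) :
    (Matrix.toEuclideanCLM (𝕜 := ℝ) ((1 : Matrix (Fin k) (Fin k) ℝ) - γ • vecMulVec e d))
      ((WithLp.equiv 2 (Fin k → ℝ)).symm y)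
    = (WithLp.equiv 2 (Fin k → ℝ)).symm (y - (γ*(d ⬝ᵥ y)) • e) := by
  rw [WithLp.equiv_symm_apply, Matrix.toEuclideanCLM_toLp]
  congr 1
  rw [ Matrix.sub_mulVec, Matrix.one_mulVec, Matrix.smul_mulVec,
    vecMulVec_mulVec', smul_smul]

lemma core_scalar (γ μ E2 D2 c a b n : ℝ) (hγ : 0 ≤ γ) (hμ0 : 0 ≤ μ)
    (hE2 : 0 ≤ E2) (hD2 : 0 ≤ D2) (hn : 0 ≤ n) (hc : c^2 ≤ E2*D2) (hb : b^2 ≤ D2*n)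
    (hCS : ((γ*D2)*a + (-(μ+γ*c))*b)^2
      ≤ ((γ*D2)^2*E2 + 2*(γ*D2)*(-(μ+γ*c))*c + (μ+γ*c)^2*D2)*n)
    (hrel : E2*D2 = c^2 → D2*a = c*b)
    (hstar : μ^2 = (γ^2*E2*D2 - 2*γ*c)*μ + γ^2*(E2*D2 - c^2))
    (htr : γ^2*E2*D2 - 2*γ*c ≤ 2*μ) :
    γ^2*E2*b^2 - 2*γ*a*b ≤ μ*n := by
  rcases eq_or_lt_of_le hμ0 with hμ | hμ
  · -- μ = 0
    have hμ' : μ = 0 := hμ.symm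
    subst hμ'
    have h0 : γ^2*(E2*D2 - c^2) = 0 := by linarith [hstar]
    rcases eq_or_lt_of_le hγ with hγ0 | hγpos
    · rw [← hγ0]; nlinarith
    · have hEDc : E2*D2 = c^2 := by nlinarith [mul_pos hγpos hγpos]
      have hr := hrel hEDc
      rcases eq_or_lt_of_le hD2 with hD20 | hD2pos
      · have hb0 : b = 0 := by nlinarith [sq_nonneg b]
        rw [hb0]; nlinarith
      · have hh : b^2*(γ^2*E2*D2 - 2*γ*c) ≤ 0 := by nlinarith [sq_nonneg b]
        have hrel2 : 2*γ*b*(D2*a) = 2*γ*b*(c*b) := by rw [hr]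
        nlinarith [hh, hrel2, hD2pos]
  · -- μ > 0
    have hγpos : 0 < γ := by
      rcases eq_or_lt_of_le hγ with h | h
      · exfalso; rw [← h] at hstar; nlinarith
      · exact h
    have hD2pos : 0 < D2 := by
      rcases eq_or_lt_of_le hD2 with h | h
      · exfalso
        have hc0 : c = 0 := by nlinarith [sq_nonneg c]
        rw [← h] at hstar; rw [hc0] at hstar; nlinarith
      · exact h
    have hNpos : 0 < (γ*D2)^2*E2 + 2*(γ*D2)*(-(μ+γ*c))*c + (μ+γ*c)^2*D2 := by
      have h1 : (γ*D2)^2*E2 + 2*(γ*D2)*(-(μ+γ*c))*c + (μ+γ*c)^2*D2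
          = D2*(γ^2*(E2*D2 - c^2) + μ^2) := by ring
      rw [h1]
      have h2 : 0 ≤ γ^2*(E2*D2 - c^2) := by nlinarith
      nlinarith [mul_pos hμ hμ]
    have hkey : μ*(γ*D2)^2*(μ*((γ*D2)*a + (-(μ+γ*c))*b)^2
          - ((γ*D2)^2*E2 + 2*(γ*D2)*(-(μ+γ*c))*c + (μ+γ*c)^2*D2)*(γ^2*E2*b^2 - 2*γ*a*b))
        = (μ*(γ*D2)^2*a + (μ*(γ*D2)*(-(μ+γ*c))
            + ((γ*D2)^2*E2 + 2*(γ*D2)*(-(μ+γ*c))*c + (μ+γ*c)^2*D2)*γ)*b)^2 := by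
      linear_combination (γ^2*D2^2*b^2*(μ^2 + γ^2*(E2*D2 - c^2))) * hstar
    have h1 : μ^2*(γ*D2)^2*(((γ*D2)*a + (-(μ+γ*c))*b)^2)
        ≤ μ^2*(γ*D2)^2*((((γ*D2)^2*E2 + 2*(γ*D2)*(-(μ+γ*c))*c + (μ+γ*c)^2*D2))*n) :=
      mul_le_mul_of_nonneg_left hCS (by positivity)
    have h2 : 0 ≤ μ*(γ*D2)^2*((γ*D2)^2*E2 + 2*(γ*D2)*(-(μ+γ*c))*c + (μ+γ*c)^2*D2)
        *(μ*n - (γ^2*E2*b^2 - 2*γ*a*b)) := by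
      nlinarith [hkey, h1, sq_nonneg (μ*(γ*D2)^2*a + (μ*(γ*D2)*(-(μ+γ*c))
            + ((γ*D2)^2*E2 + 2*(γ*D2)*(-(μ+γ*c))*c + (μ+γ*c)^2*D2)*γ)*b)]
    have hppos : 0 < μ*(γ*D2)^2*((γ*D2)^2*E2 + 2*(γ*D2)*(-(μ+γ*c))*c + (μ+γ*c)^2*D2) := by
      have hp : 0 < γ*D2 := mul_pos hγpos hD2pos
      positivity
    nlinarith [h2, hppos]

lemma core_ineq {k : ℕ} (γ μ : ℝ) (hγ : 0 ≤ γ) (hμ0 : 0 ≤ μ) (e d y : Fin k → ℝ)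
    (hstar : μ^2 = (γ^2*(e ⬝ᵥ e)*(d ⬝ᵥ d) - 2*γ*(e ⬝ᵥ d))*μ
      + γ^2*((e ⬝ᵥ e)*(d ⬝ᵥ d) - (e ⬝ᵥ d)^2))
    (htr : γ^2*(e ⬝ᵥ e)*(d ⬝ᵥ d) - 2*γ*(e ⬝ᵥ d) ≤ 2*μ) :
    γ^2*(e ⬝ᵥ e)*(d ⬝ᵥ y)^2 - 2*γ*(e ⬝ᵥ y)*(d ⬝ᵥ y) ≤ μ*(y ⬝ᵥ y) := by
  have hde : d ⬝ᵥ e = e ⬝ᵥ d := dotProduct_comm d e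
  have hCS : (((γ*(d ⬝ᵥ d))*(e ⬝ᵥ y) + (-(μ+γ*(e ⬝ᵥ d)))*(d ⬝ᵥ y))^2
      ≤ ((γ*(d ⬝ᵥ d))^2*(e ⬝ᵥ e) + 2*(γ*(d ⬝ᵥ d))*(-(μ+γ*(e ⬝ᵥ d)))*(e ⬝ᵥ d)
        + (μ+γ*(e ⬝ᵥ d))^2*(d ⬝ᵥ d))*(y ⬝ᵥ y)) := by
    have h := dot_cauchy ((γ*(d ⬝ᵥ d)) • e + (-(μ+γ*(e ⬝ᵥ d))) • d) y
    simp only [add_dotProduct, dotProduct_add, smul_dotProduct, dotProduct_smul,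
      smul_eq_mul, hde] at h
    linarith [h]
  have hrel : (e ⬝ᵥ e)*(d ⬝ᵥ d) = (e ⬝ᵥ d)^2 → (d ⬝ᵥ d)*(e ⬝ᵥ y) = (e ⬝ᵥ d)*(d ⬝ᵥ y) := by
    intro hEDc
    have hw : ((d ⬝ᵥ d) • e - (e ⬝ᵥ d) • d) ⬝ᵥ ((d ⬝ᵥ d) • e - (e ⬝ᵥ d) • d) = 0 := by
      simp only [sub_dotProduct, dotProduct_sub, smul_dotProduct, dotProduct_smul,
        smul_eq_mul, hde]
      linear_combination (d ⬝ᵥ d) * hEDc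
    have hw0 : (d ⬝ᵥ d) • e - (e ⬝ᵥ d) • d = 0 := dotProduct_self_eq_zero.mp hw
    have h1 : ((d ⬝ᵥ d) • e - (e ⬝ᵥ d) • d) ⬝ᵥ y = 0 := by rw [hw0]; simp
    simp only [sub_dotProduct, smul_dotProduct, smul_eq_mul] at h1
    linarith
  exact core_scalar γ μ (e ⬝ᵥ e) (d ⬝ᵥ d) (e ⬝ᵥ d) (e ⬝ᵥ y) (d ⬝ᵥ y) (y ⬝ᵥ y)
    hγ hμ0 (dot_self_nonneg e) (dot_self_nonneg d) (dot_self_nonneg y)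
    (dot_cauchy e d) (dot_cauchy d y) hCS hrel hstar htr

lemma key_norm {k : ℕ} (hk : 3 ≤ k) (γ μ : ℝ) (hγ : 0 ≤ γ) (hμ0 : 0 ≤ μ)
    (e d : Fin k → ℝ)
    (hstar : μ^2 = (γ^2*(e ⬝ᵥ e)*(d ⬝ᵥ d) - 2*γ*(e ⬝ᵥ d))*μ
      + γ^2*((e ⬝ᵥ e)*(d ⬝ᵥ d) - (e ⬝ᵥ d)^2))
    (htr : γ^2*(e ⬝ᵥ e)*(d ⬝ᵥ d) - 2*γ*(e ⬝ᵥ d) ≤ 2*μ) :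
    l2OpNorm (1 - γ • vecMulVec e d) = Real.sqrt (1+μ) := by
  have h1μ : (0:ℝ) ≤ 1 + μ := by linarith
  set T := Matrix.toEuclideanCLM (𝕜 := ℝ) ((1 : Matrix (Fin k) (Fin k) ℝ) - γ • vecMulVec e d)
    with hTdef
  have hact : ∀ y : Fin k → ℝ, T ((WithLp.equiv 2 (Fin k → ℝ)).symm y)
      = (WithLp.equiv 2 (Fin k → ℝ)).symm (y - (γ*(d ⬝ᵥ y)) • e) := by
    intro y
    rw [hTdef, WithLp.equiv_symm_apply, Matrix.toEuclideanCLM_toLp]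
    congr 1
    rw [ Matrix.sub_mulVec, Matrix.one_mulVec, Matrix.smul_mulVec,
      vecMulVec_mulVec', smul_smul]
  -- squared-norm formula
  have hTsq : ∀ y : Fin k → ℝ, ‖T ((WithLp.equiv 2 (Fin k → ℝ)).symm y)‖^2
      = y ⬝ᵥ y - 2*γ*(e ⬝ᵥ y)*(d ⬝ᵥ y) + γ^2*(e ⬝ᵥ e)*(d ⬝ᵥ y)^2 := by
    intro y
    rw [hact, euc_norm_sq]
    simp only [sub_dotProduct, dotProduct_sub, smul_dotProduct, dotProduct_smul, smul_eq_mul,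
      dotProduct_comm y e]
    ring
  have hub : ‖T‖ ≤ Real.sqrt (1+μ) := by
    apply ContinuousLinearMap.opNorm_le_bound _ (Real.sqrt_nonneg _)
    intro x
    set y := WithLp.equiv 2 (Fin k → ℝ) x with hy
    have hx : x = (WithLp.equiv 2 (Fin k → ℝ)).symm y := ((WithLp.equiv 2 _).symm_apply_apply x).symm
    have hxn : ‖x‖^2 = y ⬝ᵥ y := by rw [hx]; exact euc_norm_sq y
    have h1 : ‖T x‖^2 ≤ (1+μ) * ‖x‖^2 := by
      rw [hx, hTsq y, euc_norm_sq y]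
      have := core_ineq γ μ hγ hμ0 e d y hstar htr
      linarith
    calc ‖T x‖ = Real.sqrt (‖T x‖^2) := (Real.sqrt_sq (norm_nonneg _)).symm
      _ ≤ Real.sqrt ((1+μ) * ‖x‖^2) := Real.sqrt_le_sqrt h1
      _ = Real.sqrt (1+μ) * ‖x‖ := by
          rw [Real.sqrt_mul h1μ, Real.sqrt_sq (norm_nonneg _)]
  have hlb : Real.sqrt (1+μ) ≤ ‖T‖ := by
    -- produce a witness z
    obtain ⟨z, hz0, hzeq⟩ : ∃ z : Fin k → ℝ, z ≠ 0 ∧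
        (z ⬝ᵥ z - 2*γ*(e ⬝ᵥ z)*(d ⬝ᵥ z) + γ^2*(e ⬝ᵥ e)*(d ⬝ᵥ z)^2 = (1+μ)*(z ⬝ᵥ z)) := by
      rcases eq_or_lt_of_le hμ0 with hμe | hμpos
      · -- μ = 0 : pick z with d ⬝ᵥ z = 0
        obtain ⟨z, hz0, hdz⟩ : ∃ z : Fin k → ℝ, z ≠ 0 ∧ d ⬝ᵥ z = 0 := by
          by_cases hd : d = 0
          · refine ⟨Pi.single ⟨0, by omega⟩ 1, ?_, by simp [hd]⟩
            intro h
            have := congrFun h ⟨0, by omega⟩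
            simp at this
          · obtain ⟨i, hi⟩ := Function.ne_iff.mp hd
            have hi' : d i ≠ 0 := by simpa using hi
            have : Nontrivial (Fin k) := ⟨⟨⟨0, by omega⟩, ⟨1, by omega⟩, by
              intro hc; apply_fun Fin.val at hc; simp at hc⟩⟩
            obtain ⟨j, hji⟩ := exists_ne i
            have hij : i ≠ j := hji.symm
            refine ⟨d i • (Pi.single j 1 : Fin k → ℝ) - d j • (Pi.single i 1 : Fin k → ℝ),
              ?_, ?_⟩
            · intro h
              have := congrFun h j
              simp [Pi.single_eq_same, Pi.single_eq_of_ne (Ne.symm hij)] at this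
              exact hi' this
            · simp [dotProduct_sub, dotProduct_smul, dotProduct_single]
              ring
        refine ⟨z, hz0, ?_⟩
        rw [hdz, ← hμe]
        ring
      · -- μ > 0
        have hγpos : 0 < γ := by
          rcases eq_or_lt_of_le hγ with h | h
          · exfalso; rw [← h] at hstar; nlinarith
          · exact h
        have hD2pos : 0 < d ⬝ᵥ d := by
          rcases eq_or_lt_of_le (dot_self_nonneg d) with h | h
          · exfalso
            have hc0 : e ⬝ᵥ d = 0 := by
              have hcs := dot_cauchy e d
              rw [← h, mul_zero] at hcs
              have h2 : (e ⬝ᵥ d)^2 = 0 := le_antisymm hcs (sq_nonneg _)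
              exact pow_eq_zero_iff (by norm_num : (2:ℕ) ≠ 0) |>.mp h2
            rw [← h] at hstar; rw [hc0] at hstar; nlinarith
          · exact h
        refine ⟨(γ*(d ⬝ᵥ d)) • e - (μ + γ*(e ⬝ᵥ d)) • d, ?_, ?_⟩
        · intro h
          have hdz : d ⬝ᵥ ((γ*(d ⬝ᵥ d)) • e - (μ + γ*(e ⬝ᵥ d)) • d) = 0 := by rw [h]; simp
          simp only [dotProduct_sub, dotProduct_smul, smul_eq_mul, dotProduct_comm d e] at hdz
          nlinarith [hdz, hD2pos, hμpos]
        · simp only [sub_dotProduct, dotProduct_sub, smul_dotProduct, dotProduct_smul,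
            smul_eq_mul, dotProduct_comm d e]
          linear_combination (-(d ⬝ᵥ d)*μ) * hstar
    -- use the witness
    set x := (WithLp.equiv 2 (Fin k → ℝ)).symm z with hxz
    have hxn : ‖x‖^2 = z ⬝ᵥ z := euc_norm_sq z
    have hxpos : 0 < ‖x‖ := by
      rcases (norm_nonneg x).eq_or_lt with h | h
      · exfalso
        have : z ⬝ᵥ z = 0 := by rw [← hxn, ← h]; ring
        exact hz0 (dotProduct_self_eq_zero.mp this)
      · exact h
    have hTx : ‖T x‖^2 = (1+μ)*‖x‖^2 := by
      rw [hxz, hTsq z, euc_norm_sq z] at *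
      linarith [hzeq]
    have hTxn : ‖T x‖ = Real.sqrt (1+μ) * ‖x‖ := by
      have : ‖T x‖ = Real.sqrt ((1+μ)*‖x‖^2) := by
        rw [← hTx, Real.sqrt_sq (norm_nonneg _)]
      rw [this, Real.sqrt_mul h1μ, Real.sqrt_sq (norm_nonneg _)]
    have hle := T.le_opNorm x
    rw [hTxn] at hle
    exact le_of_mul_le_mul_right hle hxpos
  rw [l2OpNorm, ← hTdef]
  exact le_antisymm hub hlb

theorem opNorm_implicit_td_lambda (k : ℕ) (hk : 3 ≤ k) (α : ℝ) (hα : 0 ≤ α)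
    (e d : Fin k → ℝ)
    (Q Xm : Matrix (Fin k) (Fin k) ℝ)
    (hQ : Q = ((1 : Matrix (Fin k) (Fin k) ℝ) + α • Matrix.vecMulVec e e)⁻¹)
    (hX : Xm = Matrix.vecMulVec e d)
    (β : ℝ) (hβ : β = 1 - α * euclNorm e ^ 2 / (1 + α * euclNorm e ^ 2))
    (lp : ℝ)
    (hlp : lp = 1 + (α ^ 2 * β ^ 2 * euclNorm e ^ 2 * euclNorm d ^ 2 - 2 * α * β * (e ⬝ᵥ d) +
        α * β * euclNorm e * euclNorm d *
          Real.sqrt (α ^ 2 * β ^ 2 * euclNorm e ^ 2 * euclNorm d ^ 2 + 4 - 4 * α * β * (e ⬝ᵥ d))) / 2) :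
    l2OpNorm (1 - α • (Q * Xm)) = Real.sqrt (max lp 1) := by
  have hEv0 : 0 ≤ euclNorm e := Real.sqrt_nonneg _
  have hDv0 : 0 ≤ euclNorm d := Real.sqrt_nonneg _
  have hEv2 : euclNorm e ^ 2 = e ⬝ᵥ e := Real.sq_sqrt (dot_self_nonneg e)
  have hDv2 : euclNorm d ^ 2 = d ⬝ᵥ d := Real.sq_sqrt (dot_self_nonneg d)
  have hden : (0:ℝ) < 1 + α * euclNorm e ^ 2 := by nlinarith [mul_nonneg hα (sq_nonneg (euclNorm e))]
  have hβ1 : β * (1 + α * euclNorm e ^ 2) = 1 := by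
    rw [hβ]; field_simp; ring
  have hβpos : 0 < β := by
    rcases lt_trichotomy β 0 with h | h | h
    · nlinarith
    · rw [h] at hβ1; simp at hβ1
    · exact h
  have hγ0 : 0 ≤ α * β := mul_nonneg hα hβpos.le
  -- Sherman-Morrison
  have hQval : Q = 1 - (α*β) • vecMulVec e e := by
    rw [hQ]
    apply inv_eq_right_inv
    rw [mul_sub, mul_one, add_mul, one_mul, Matrix.smul_mul, Matrix.mul_smul, vecMulVec_mul',
      smul_smul, smul_smul]
    rw [← hEv2]
    have hco : α - (α*β + α * (α*β) * euclNorm e ^ 2) = 0 := by nlinarith [hβ1]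
    calc 1 + α • vecMulVec e e - ((α*β) • vecMulVec e e + (α * (α*β) * euclNorm e ^2) • vecMulVec e e)
        = 1 + (α - (α*β + α * (α*β) * euclNorm e ^ 2)) • vecMulVec e e := by
          rw [sub_smul, add_smul]; abel
      _ = 1 := by rw [hco, zero_smul, add_zero]
  have hmat : (1 : Matrix (Fin k) (Fin k) ℝ) - α • (Q * Xm)
      = 1 - (α*β) • vecMulVec e d := by
    rw [hQval, hX, sub_mul, one_mul, Matrix.smul_mul, vecMulVec_mul', smul_smul, ← hEv2]
    have h2 : α • (vecMulVec e d - (α * β * euclNorm e ^ 2) • vecMulVec e d)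
        = (α*β) • vecMulVec e d := by
      rw [smul_sub, smul_smul, ← sub_smul]
      congr 1
      nlinarith [hβ1]
    rw [h2]
  rw [hmat]
  -- scalar setup
  set s := Real.sqrt (α ^ 2 * β ^ 2 * euclNorm e ^ 2 * euclNorm d ^ 2 + 4 - 4 * α * β * (e ⬝ᵥ d))
    with hsdef
  have hcle : e ⬝ᵥ d ≤ euclNorm e * euclNorm d := by
    nlinarith [dot_cauchy e d, hEv2, hDv2, mul_nonneg hEv0 hDv0]
  have hc2 : (e ⬝ᵥ d)^2 ≤ euclNorm e ^2 * euclNorm d ^2 := by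
    rw [hEv2, hDv2]; exact dot_cauchy e d
  have hrad : 0 ≤ α ^ 2 * β ^ 2 * euclNorm e ^ 2 * euclNorm d ^ 2 + 4 - 4 * α * β * (e ⬝ᵥ d) := by
    nlinarith [sq_nonneg (α*β*euclNorm e*euclNorm d - 2), hγ0, hcle]
  have hs0 : 0 ≤ s := Real.sqrt_nonneg _
  have hs2 : s^2 = α ^ 2 * β ^ 2 * euclNorm e ^ 2 * euclNorm d ^ 2 + 4 - 4 * α * β * (e ⬝ᵥ d) :=
    Real.sq_sqrt hrad
  set μ := lp - 1 with hμdef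
  have hμval : μ = ((α*β)^2 * euclNorm e ^2 * euclNorm d ^2 - 2*(α*β)*(e ⬝ᵥ d)
      + (α*β) * euclNorm e * euclNorm d * s)/2 := by
    rw [hμdef, hlp]; ring
  have hEDs : 0 ≤ (α*β) * euclNorm e * euclNorm d * s :=
    mul_nonneg (mul_nonneg (mul_nonneg hγ0 hEv0) hDv0) hs0
  have hX1 : 2*(e ⬝ᵥ d) - (α*β)*euclNorm e^2*euclNorm d^2 ≤ euclNorm e * euclNorm d * s := by
    nlinarith [hs2, hc2, mul_nonneg (mul_nonneg hEv0 hDv0) hs0, hs0,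
      mul_nonneg hEv0 hDv0]
  have hμ0 : 0 ≤ μ := by nlinarith [hμval, mul_nonneg hγ0 (sub_nonneg.2 hX1)]
  have htr : (α*β)^2*(e ⬝ᵥ e)*(d ⬝ᵥ d) - 2*(α*β)*(e ⬝ᵥ d) ≤ 2*μ := by
    rw [← hEv2, ← hDv2]
    nlinarith [hμval, hEDs]
  have hstar : μ^2 = ((α*β)^2*(e ⬝ᵥ e)*(d ⬝ᵥ d) - 2*(α*β)*(e ⬝ᵥ d))*μ
      + (α*β)^2*((e ⬝ᵥ e)*(d ⬝ᵥ d) - (e ⬝ᵥ d)^2) := by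
    rw [← hEv2, ← hDv2]
    linear_combination (μ + ((α*β)^2*euclNorm e^2*euclNorm d^2 - 2*(α*β)*(e ⬝ᵥ d)
        + (α*β)*euclNorm e*euclNorm d*s)/2 - ((α*β)^2*euclNorm e^2*euclNorm d^2 - 2*(α*β)*(e ⬝ᵥ d))) * hμval
      + ((α*β)^2*euclNorm e^2*euclNorm d^2/4) * hs2
  have hmax : max lp 1 = 1 + μ := by
    rw [hμdef, max_eq_left (by linarith : (1:ℝ) ≤ lp)]; ring
  rw [hmax]
  exact key_norm hk (α*β) μ hγ0 hμ0 e d hstar htr
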